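/- Let G be a finite tree in which every vertex has odd degree. If C is a vertex cover of G of minimum size among all vertex covers of G that contain no leaf, then C is an information dominating set of G of minimum size among all information dominating sets of G. -/

import Mathlib

open Classical

/-- A binary opinion profile `μ` on a finite simple graph `G` is valid under the
local majority rule. -/
def IsValidProfile {V : Type*} [Fintype V] (G : SimpleGraph V) (μ : V → Bool) : Prop :=
  ∀ v : V,
    ((G.neighborFinset v).filter fun u => μ u = μ v).card ≥
    ((G.neighborFinset v).filter fun u => μ u ≠ μ v).card

/-- A subset `D` of the vertices is an information dominating set: any two valid
opinion profiles that agree on `D` are equal. -/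
def IsIDS {V : Type*} [Fintype V] (G : SimpleGraph V) (D : Set V) : Prop :=
  ∀ μ ν : V → Bool, IsValidProfile G μ → IsValidProfile G ν →
    (∀ v ∈ D, μ v = ν v) → μ = ν

/-- `C` is a vertex cover: every edge has at least one endpoint in `C`. -/
def IsVertexCover {V : Type*} (G : SimpleGraph V) (C : Set V) : Prop :=
  ∀ ⦃u v : V⦄, G.Adj u v → u ∈ C ∨ v ∈ C

open SimpleGraph Finset

section AuxIDS
variable {V : Type*} [Fintype V] {G : SimpleGraph V}

/-- No triangles in an acyclic graph. -/
lemma aux_no_triangle (hac : G.IsAcyclic) {u v x : V} (huv : G.Adj u v)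
    (hux : G.Adj u x) (hvx : G.Adj v x) : False := by
  have hp2 : (Walk.cons hux (Walk.cons hvx.symm Walk.nil)).IsPath := by
    simp [Walk.cons_isPath_iff, huv.ne, hux.ne, hux.ne', hvx.ne']
  have h := hac.path_unique (SimpleGraph.Path.singleton huv) ⟨_, hp2⟩
  have hl := congrArg (fun p : G.Path u v => p.1.length) h
  simp [SimpleGraph.Path.singleton] at hl

/-- The graph `G` with all edges at `u` or `v` removed. -/
def gAvoid (G : SimpleGraph V) (u v : V) : SimpleGraph V where
  Adj a b := G.Adj a b ∧ a ≠ u ∧ a ≠ v ∧ b ≠ u ∧ b ≠ v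
  symm := ⟨fun a b ⟨h, h1, h2, h3, h4⟩ => ⟨h.symm, h3, h4, h1, h2⟩⟩
  loopless := ⟨fun a h => G.loopless.irrefl a h.1⟩

lemma gAvoid_support_ne {u v a b : V} (p : (gAvoid G u v).Walk a b)
    (ha : a ≠ u ∧ a ≠ v) : ∀ z ∈ p.support, z ≠ u ∧ z ≠ v := by
  induction p with
  | nil =>
    intro z hz
    rw [Walk.support_nil, List.mem_singleton] at hz
    exact hz ▸ ha
  | cons h q ih =>
    intro z hz
    rw [Walk.support_cons, List.mem_cons] at hz
    rcases hz with rfl | hz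
    · exact ha
    · exact ih ⟨h.2.2.2.1, h.2.2.2.2⟩ z hz

lemma gAvoid_reachable_path {u v a b : V} (h : (gAvoid G u v).Reachable a b)
    (ha : a ≠ u ∧ a ≠ v) :
    ∃ p : G.Path a b, ∀ z ∈ p.1.support, z ≠ u ∧ z ≠ v := by
  obtain ⟨w⟩ := h
  have hsup : ∀ z ∈ w.support, z ≠ u ∧ z ≠ v := gAvoid_support_ne w ha
  have hle : gAvoid G u v ≤ G := fun a b h => h.1
  have hedges : ∀ e ∈ w.edges, e ∈ G.edgeSet := fun e he =>
    (SimpleGraph.edgeSet_mono hle) (w.edges_subset_edgeSet he)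
  let w' := w.transfer G hedges
  refine ⟨w'.toPath, fun z hz => hsup z ?_⟩
  have := Walk.support_toPath_subset w' hz
  rwa [Walk.support_transfer] at this

lemma aux_isPath_concat {a b c : V} {p : G.Walk a b} (hp : p.IsPath) (h : G.Adj b c)
    (hc : c ∉ p.support) : (p.concat h).IsPath := by
  have h1 : (Walk.cons h.symm p.reverse).IsPath :=
    (Walk.cons_isPath_iff _ _).2 ⟨hp.reverse, by
      rwa [Walk.support_reverse, List.mem_reverse]⟩
  have h2 := h1.reverse
  rwa [Walk.reverse_cons, Walk.reverse_reverse, ← Walk.concat_eq_append] at h2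

/-- Separation lemma: two distinct vertices, each adjacent to `u` or `v` and different
from `u, v`, cannot be connected avoiding `u` and `v` in a tree. -/
lemma gAvoid_sep (htree : G.IsTree) {u v x y : V} (huv : G.Adj u v)
    (hx1 : G.Adj u x ∨ G.Adj v x) (hx2 : x ≠ u) (hx3 : x ≠ v)
    (hy1 : G.Adj u y ∨ G.Adj v y) (hy2 : y ≠ u) (hy3 : y ≠ v)
    (hr : (gAvoid G u v).Reachable x y) : x = y := by
  by_contra hxy
  obtain ⟨p, hp⟩ := gAvoid_reachable_path hr ⟨hx2, hx3⟩
  have hup : u ∉ p.1.support := fun h => (hp u h).1 rfl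
  have hvp : v ∉ p.1.support := fun h => (hp v h).2 rfl
  have hxs : x ∈ p.1.support := p.1.start_mem_support

  rcases hx1 with hux | hvx <;> rcases hy1 with huy | hvy
  · -- both adjacent to u : two paths u → y
    have hP1 : (Walk.cons hux p.1).IsPath := (Walk.cons_isPath_iff _ _).2 ⟨p.2, hup⟩
    have heq := htree.IsAcyclic.path_unique ⟨_, hP1⟩ (SimpleGraph.Path.singleton huy)
    have hx1' : x ∈ (Walk.cons hux p.1).support := by
      rw [Walk.support_cons]; exact List.mem_cons_of_mem _ hxs
    rw [congrArg (fun q : G.Path u y => q.1.support) heq] at hx1'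
    have : x = u ∨ x = y := by
      simpa [SimpleGraph.Path.singleton] using hx1'
    rcases this with hc | hc
    · exact hx2 hc
    · exact hxy hc
  · -- x adj u, y adj v : two paths u → v
    have hPc : (p.1.concat hvy.symm).IsPath := aux_isPath_concat p.2 hvy.symm hvp
    have hP1 : (Walk.cons hux (p.1.concat hvy.symm)).IsPath :=
      (Walk.cons_isPath_iff _ _).2 ⟨hPc, by
        simp only [Walk.support_concat, List.concat_eq_append, List.mem_append,
          List.mem_singleton]
        push_neg
        exact ⟨hup, huv.ne⟩⟩
    have heq := htree.IsAcyclic.path_unique ⟨_, hP1⟩ (SimpleGraph.Path.singleton huv)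
    have hx1' : x ∈ (Walk.cons hux (p.1.concat hvy.symm)).support := by
      rw [Walk.support_cons]
      refine List.mem_cons_of_mem _ ?_
      simp only [Walk.support_concat, List.concat_eq_append, List.mem_append,
        List.mem_singleton]
      exact Or.inl hxs
    rw [congrArg (fun q : G.Path u v => q.1.support) heq] at hx1'
    have : x = u ∨ x = v := by
      simpa [SimpleGraph.Path.singleton] using hx1'
    rcases this with hc | hc
    · exact hx2 hc
    · exact hx3 hc
  · -- x adj v, y adj u : two paths v → u
    have hPc : (p.1.concat huy.symm).IsPath := aux_isPath_concat p.2 huy.symm hup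
    have hP1 : (Walk.cons hvx (p.1.concat huy.symm)).IsPath :=
      (Walk.cons_isPath_iff _ _).2 ⟨hPc, by
        simp only [Walk.support_concat, List.concat_eq_append, List.mem_append,
          List.mem_singleton]
        push_neg
        exact ⟨hvp, huv.ne'⟩⟩
    have heq := htree.IsAcyclic.path_unique ⟨_, hP1⟩ (SimpleGraph.Path.singleton huv.symm)
    have hx1' : x ∈ (Walk.cons hvx (p.1.concat huy.symm)).support := by
      rw [Walk.support_cons]
      refine List.mem_cons_of_mem _ ?_
      simp only [Walk.support_concat, List.concat_eq_append, List.mem_append,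
        List.mem_singleton]
      exact Or.inl hxs
    rw [congrArg (fun q : G.Path v u => q.1.support) heq] at hx1'
    have : x = v ∨ x = u := by
      simpa [SimpleGraph.Path.singleton] using hx1'
    rcases this with hc | hc
    · exact hx3 hc
    · exact hx2 hc
  · -- both adjacent to v
    have hP1 : (Walk.cons hvx p.1).IsPath := (Walk.cons_isPath_iff _ _).2 ⟨p.2, hvp⟩
    have heq := htree.IsAcyclic.path_unique ⟨_, hP1⟩ (SimpleGraph.Path.singleton hvy)
    have hx1' : x ∈ (Walk.cons hvx p.1).support := by
      rw [Walk.support_cons]; exact List.mem_cons_of_mem _ hxs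
    rw [congrArg (fun q : G.Path v y => q.1.support) heq] at hx1'
    have : x = v ∨ x = y := by
      simpa [SimpleGraph.Path.singleton] using hx1'
    rcases this with hc | hc
    · exact hx3 hc
    · exact hxy hc


section Main
variable {V : Type*} [Fintype V] {G : SimpleGraph V}

lemma valid_at_of_ne_subset {x : V} {μ : V → Bool} {B : Finset V}
    (hsub : ∀ y ∈ G.neighborFinset x, μ y ≠ μ x → y ∈ B)
    (hcard : 2 * B.card ≤ G.degree x) :
    ((G.neighborFinset x).filter fun y => μ y = μ x).card ≥
    ((G.neighborFinset x).filter fun y => μ y ≠ μ x).card := by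
  classical
  have hsum : ((G.neighborFinset x).filter fun y => μ y = μ x).card +
      ((G.neighborFinset x).filter fun y => μ y ≠ μ x).card = G.degree x :=
    Finset.card_filter_add_card_filter_not (p := fun y => μ y = μ x)
  have hle : ((G.neighborFinset x).filter fun y => μ y ≠ μ x).card ≤ B.card :=
    Finset.card_le_card fun y hy => by
      rw [Finset.mem_filter] at hy; exact hsub y hy.1 hy.2
  omega

lemma aux_bool_true {a : Bool} (h : a ≠ false) : a = true := by
  cases a
  · exact absurd rfl h
  · rfl

lemma exists_two_valid (htree : G.IsTree) {u v : V} (huv : G.Adj u v) :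
    ∃ μ ν : V → Bool, IsValidProfile G μ ∧ IsValidProfile G ν ∧ μ u ≠ ν u ∧
      ∀ x : V, μ x ≠ ν x →
        x = u ∨ x = v ∨ (G.Adj u x ∧ G.degree x = 1) ∨ (G.Adj v x ∧ G.degree x = 1) := by
  classical
  have hacy := htree.IsAcyclic
  have hmemnb : ∀ a b : V, b ∈ G.neighborFinset a ↔ G.Adj a b := fun a b => by
    simp [SimpleGraph.mem_neighborFinset]
  have hdeg_eq : ∀ a : V, (G.neighborFinset a).card = G.degree a := fun a => rfl
  -- leaf's unique neighbor
  have hleafnbr : ∀ x y : V, G.degree x = 1 → G.Adj x y → G.neighborFinset x = {y} := by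
    intro x y hdeg hadj
    have hmem : y ∈ G.neighborFinset x := (hmemnb x y).2 hadj
    refine Finset.eq_singleton_iff_unique_mem.2 ⟨hmem, fun z hz => ?_⟩
    have hcard : (G.neighborFinset x).card ≤ 1 := by rw [hdeg_eq, hdeg]
    exact Finset.card_le_one.1 hcard z hz y hmem
  set Su : Finset V := (G.neighborFinset u).filter (fun y => y = v ∨ G.degree y = 1) with hSu
  set Wu : Finset V := (G.neighborFinset u).filter (fun y => ¬ (y = v ∨ G.degree y = 1)) with hWu
  set Sv : Finset V := (G.neighborFinset v).filter (fun y => y = u ∨ G.degree y = 1) with hSv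
  set Wv : Finset V := (G.neighborFinset v).filter (fun y => ¬ (y = u ∨ G.degree y = 1)) with hWv
  have hSuWu : Su.card + Wu.card = G.degree u :=
    Finset.card_filter_add_card_filter_not (p := fun y => y = v ∨ G.degree y = 1)
  have hSvWv : Sv.card + Wv.card = G.degree v :=
    Finset.card_filter_add_card_filter_not (p := fun y => y = u ∨ G.degree y = 1)
  have hvSu : v ∈ Su := Finset.mem_filter.2 ⟨(hmemnb u v).2 huv, Or.inl rfl⟩
  have huSv : u ∈ Sv := Finset.mem_filter.2 ⟨(hmemnb v u).2 huv.symm, Or.inl rfl⟩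
  have hSu1 : 1 ≤ Su.card := Finset.card_pos.2 ⟨v, hvSu⟩
  have hSv1 : 1 ≤ Sv.card := Finset.card_pos.2 ⟨u, huSv⟩
  obtain ⟨Tu, hTuW, hTucard⟩ : ∃ T ⊆ Wu, T.card = G.degree u / 2 + 1 - Su.card :=
    Finset.exists_subset_card_eq (by omega)
  obtain ⟨Tv, hTvW, hTvcard⟩ : ∃ T ⊆ Wv, T.card = G.degree v / 2 + 1 - Sv.card :=
    Finset.exists_subset_card_eq (by omega)
  have hTuR : ∀ w ∈ Tu, G.Adj u w ∧ w ≠ u ∧ w ≠ v ∧ G.degree w ≠ 1 := by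
    intro w hw
    obtain ⟨h1, h2⟩ := Finset.mem_filter.1 (hTuW hw)
    push_neg at h2
    exact ⟨(hmemnb u w).1 h1, ((hmemnb u w).1 h1).ne', h2.1, h2.2⟩
  have hTvR : ∀ w ∈ Tv, G.Adj v w ∧ w ≠ u ∧ w ≠ v ∧ G.degree w ≠ 1 := by
    intro w hw
    obtain ⟨h1, h2⟩ := Finset.mem_filter.1 (hTvW hw)
    push_neg at h2
    exact ⟨(hmemnb v w).1 h1, h2.1, ((hmemnb v w).1 h1).ne', h2.2⟩
  have hroot : ∀ w, (w ∈ Tu ∨ w ∈ Tv) →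
      (G.Adj u w ∨ G.Adj v w) ∧ w ≠ u ∧ w ≠ v ∧ G.degree w ≠ 1 := by
    rintro w (hw | hw)
    · exact ⟨Or.inl (hTuR w hw).1, (hTuR w hw).2⟩
    · exact ⟨Or.inr (hTvR w hw).1, (hTvR w hw).2⟩
  set InS : V → Prop := fun x => ∃ w, (w ∈ Tu ∨ w ∈ Tv) ∧ (gAvoid G u v).Reachable w x
    with hInS
  have hInS_ne : ∀ x, InS x → x ≠ u ∧ x ≠ v := by
    rintro x ⟨w, hw, hr⟩
    obtain ⟨p⟩ := hr
    exact gAvoid_support_ne p ⟨(hroot w hw).2.1, (hroot w hw).2.2.1⟩ x p.end_mem_support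
  have hInS_adj_u : ∀ y, G.Adj u y → InS y → y ∈ Tu := by
    rintro y hy ⟨w, hw, hr⟩
    have hyne := hInS_ne y ⟨w, hw, hr⟩
    have hwy : w = y := gAvoid_sep htree huv (hroot w hw).1 (hroot w hw).2.1
      (hroot w hw).2.2.1 (Or.inl hy) hyne.1 hyne.2 hr
    subst hwy
    rcases hw with hw | hw
    · exact hw
    · exact absurd (hTvR w hw).1 fun hvw => aux_no_triangle hacy huv hy hvw
  have hInS_adj_v : ∀ y, G.Adj v y → InS y → y ∈ Tv := by
    rintro y hy ⟨w, hw, hr⟩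
    have hyne := hInS_ne y ⟨w, hw, hr⟩
    have hwy : w = y := gAvoid_sep htree huv (hroot w hw).1 (hroot w hw).2.1
      (hroot w hw).2.2.1 (Or.inr hy) hyne.1 hyne.2 hr
    subst hwy
    rcases hw with hw | hw
    · exact absurd (hTuR w hw).1 fun huw => aux_no_triangle hacy huv huw hy
    · exact hw
  have hInS_closed : ∀ x y, InS x → G.Adj x y → y ≠ u → y ≠ v → InS y := by
    rintro x y ⟨w, hw, hr⟩ hxy hyu hyv
    have hx' := hInS_ne x ⟨w, hw, hr⟩
    exact ⟨w, hw, hr.trans (SimpleGraph.Adj.reachable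
      (show (gAvoid G u v).Adj x y from ⟨hxy, hx'.1, hx'.2, hyu, hyv⟩))⟩
  have hInS_root : ∀ w, (w ∈ Tu ∨ w ∈ Tv) → InS w :=
    fun w hw => ⟨w, hw, SimpleGraph.Reachable.refl w⟩
  set Pm : V → Prop := fun x => x = u ∨ x = v ∨ (G.Adj u x ∧ G.degree x = 1) ∨
      (G.Adj v x ∧ G.degree x = 1) ∨ InS x with hPm
  set μ : V → Bool := fun x => decide (Pm x) with hμdef
  set ν : V → Bool := fun x => decide (InS x) with hνdef
  have hμt : ∀ x, Pm x → μ x = true := fun x h => decide_eq_true h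
  have hμf : ∀ x, ¬ Pm x → μ x = false := fun x h => decide_eq_false h
  have hνt : ∀ x, InS x → ν x = true := fun x h => decide_eq_true h
  have hνf : ∀ x, ¬ InS x → ν x = false := fun x h => decide_eq_false h
  have hμP : ∀ x, μ x = true → Pm x := fun x h => of_decide_eq_true h
  have hνP : ∀ x, ν x = true → InS x := fun x h => of_decide_eq_true h
  have hνu : ν u = false := hνf u fun h => (hInS_ne u h).1 rfl
  have hνv : ν v = false := hνf v fun h => (hInS_ne v h).2 rfl
  have hμu : μ u = true := hμt u (Or.inl rfl)
  have hμv : μ v = true := hμt v (Or.inr (Or.inl rfl))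
  -- agree sets at u and v
  have hSuTu_sub : Su ∪ Tu ⊆ G.neighborFinset u :=
    Finset.union_subset (Finset.filter_subset _ _) (hTuW.trans (Finset.filter_subset _ _))
  have hSvTv_sub : Sv ∪ Tv ⊆ G.neighborFinset v :=
    Finset.union_subset (Finset.filter_subset _ _) (hTvW.trans (Finset.filter_subset _ _))
  have hSuTu_card : (Su ∪ Tu).card = Su.card + Tu.card := by
    apply Finset.card_union_of_disjoint
    refine Finset.disjoint_left.2 fun a ha ha' => ?_
    exact (Finset.mem_filter.1 (hTuW ha')).2 (Finset.mem_filter.1 ha).2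
  have hSvTv_card : (Sv ∪ Tv).card = Sv.card + Tv.card := by
    apply Finset.card_union_of_disjoint
    refine Finset.disjoint_left.2 fun a ha ha' => ?_
    exact (Finset.mem_filter.1 (hTvW ha')).2 (Finset.mem_filter.1 ha).2
  -- validity of μ
  have hvalidμ : IsValidProfile G μ := by
    intro x
    by_cases hxu : x = u
    · subst hxu
      refine valid_at_of_ne_subset (B := G.neighborFinset x \ (Su ∪ Tu)) ?_ ?_
      · intro y hy hne
        refine Finset.mem_sdiff.2 ⟨hy, fun hmem => hne ?_⟩
        rw [hμu]
        rcases Finset.mem_union.1 hmem with h | h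
        · rcases (Finset.mem_filter.1 h).2 with rfl | hdeg
          · exact hμv
          · exact hμt y (Or.inr (Or.inr (Or.inl
              ⟨(hmemnb x y).1 (Finset.mem_filter.1 h).1, hdeg⟩)))
        · exact hμt y (Or.inr (Or.inr (Or.inr (Or.inr (hInS_root y (Or.inl h))))))
      · have h1 : (G.neighborFinset x \ (Su ∪ Tu)).card = G.degree x - (Su.card + Tu.card) := by
          rw [Finset.card_sdiff_of_subset hSuTu_sub, hSuTu_card, hdeg_eq]
        have h2 : Su.card + Tu.card ≤ G.degree x := by
          rw [← hSuTu_card, ← hdeg_eq]; exact Finset.card_le_card hSuTu_sub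
        omega
    by_cases hxv : x = v
    · subst hxv
      refine valid_at_of_ne_subset (B := G.neighborFinset x \ (Sv ∪ Tv)) ?_ ?_
      · intro y hy hne
        refine Finset.mem_sdiff.2 ⟨hy, fun hmem => hne ?_⟩
        rw [hμv]
        rcases Finset.mem_union.1 hmem with h | h
        · rcases (Finset.mem_filter.1 h).2 with rfl | hdeg
          · exact hμu
          · exact hμt y (Or.inr (Or.inr (Or.inr (Or.inl
              ⟨(hmemnb x y).1 (Finset.mem_filter.1 h).1, hdeg⟩))))
        · exact hμt y (Or.inr (Or.inr (Or.inr (Or.inr (hInS_root y (Or.inr h))))))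
      · have h1 : (G.neighborFinset x \ (Sv ∪ Tv)).card = G.degree x - (Sv.card + Tv.card) := by
          rw [Finset.card_sdiff_of_subset hSvTv_sub, hSvTv_card, hdeg_eq]
        have h2 : Sv.card + Tv.card ≤ G.degree x := by
          rw [← hSvTv_card, ← hdeg_eq]; exact Finset.card_le_card hSvTv_sub
        omega
    by_cases hxLu : G.Adj u x ∧ G.degree x = 1
    · refine valid_at_of_ne_subset (B := ∅) ?_ (by simp)
      intro y hy hne
      exfalso
      rw [hleafnbr x u hxLu.2 hxLu.1.symm, Finset.mem_singleton] at hy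
      subst hy
      exact hne (by rw [hμu, hμt x (Or.inr (Or.inr (Or.inl hxLu)))])
    by_cases hxLv : G.Adj v x ∧ G.degree x = 1
    · refine valid_at_of_ne_subset (B := ∅) ?_ (by simp)
      intro y hy hne
      exfalso
      rw [hleafnbr x v hxLv.2 hxLv.1.symm, Finset.mem_singleton] at hy
      subst hy
      exact hne (by rw [hμv, hμt x (Or.inr (Or.inr (Or.inr (Or.inl hxLv))))])
    by_cases hxI : InS x
    · refine valid_at_of_ne_subset (B := ∅) ?_ (by simp)
      intro y hy hne
      exfalso
      apply hne
      rw [hμt x (Or.inr (Or.inr (Or.inr (Or.inr hxI))))]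
      by_cases hyu : y = u
      · rw [hyu]; exact hμu
      by_cases hyv : y = v
      · rw [hyv]; exact hμv
      exact hμt y (Or.inr (Or.inr (Or.inr (Or.inr
        (hInS_closed x y hxI ((hmemnb x y).1 hy) hyu hyv)))))
    · -- x outside everything
      have hμx : μ x = false := hμf x fun h => by
        rcases h with h | h | h | h | h
        exacts [hxu h, hxv h, hxLu h, hxLv h, hxI h]
      have key : ∀ y ∈ G.neighborFinset x, μ y ≠ μ x → y = u ∨ y = v := by
        intro y hy hne
        have hyt : μ y = true := by
          cases hμy : μ y
          · rw [hμy, hμx] at hne; exact absurd rfl hne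
          · rfl
        rcases hμP y hyt with h | h | h | h | h
        · exact Or.inl h
        · exact Or.inr h
        · exfalso
          have hx' : x ∈ G.neighborFinset y := (hmemnb y x).2 ((hmemnb x y).1 hy).symm
          rw [hleafnbr y u h.2 h.1.symm, Finset.mem_singleton] at hx'
          exact hxu hx'
        · exfalso
          have hx' : x ∈ G.neighborFinset y := (hmemnb y x).2 ((hmemnb x y).1 hy).symm
          rw [hleafnbr y v h.2 h.1.symm, Finset.mem_singleton] at hx'
          exact hxv hx'
        · exact absurd (hInS_closed y x h ((hmemnb x y).1 hy).symm hxu hxv) hxI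
      by_cases hadjux : G.Adj u x
      · refine valid_at_of_ne_subset (B := {u}) ?_ ?_
        · intro y hy hne
          rcases key y hy hne with rfl | rfl
          · exact Finset.mem_singleton_self y
          · exact absurd ((hmemnb x y).1 hy).symm
              fun h => aux_no_triangle hacy huv hadjux h
        · have hdx : G.degree x ≠ 1 := fun h => hxLu ⟨hadjux, h⟩
          have hd1 : 1 ≤ G.degree x := by
            rw [← hdeg_eq]
            exact Finset.card_pos.2 ⟨u, (hmemnb x u).2 hadjux.symm⟩
          rw [Finset.card_singleton]
          omega
      by_cases hadjvx : G.Adj v x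
      · refine valid_at_of_ne_subset (B := {v}) ?_ ?_
        · intro y hy hne
          rcases key y hy hne with rfl | rfl
          · exact absurd ((hmemnb x y).1 hy).symm
              fun h => aux_no_triangle hacy huv h hadjvx
          · exact Finset.mem_singleton_self y
        · have hdx : G.degree x ≠ 1 := fun h => hxLv ⟨hadjvx, h⟩
          have hd1 : 1 ≤ G.degree x := by
            rw [← hdeg_eq]
            exact Finset.card_pos.2 ⟨v, (hmemnb x v).2 hadjvx.symm⟩
          rw [Finset.card_singleton]
          omega
      · refine valid_at_of_ne_subset (B := ∅) ?_ (by simp)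
        intro y hy hne
        rcases key y hy hne with rfl | rfl
        · exact absurd ((hmemnb x y).1 hy).symm hadjux
        · exact absurd ((hmemnb x y).1 hy).symm hadjvx
  -- validity of ν
  have hvalidν : IsValidProfile G ν := by
    intro x
    by_cases hxu : x = u
    · subst hxu
      refine valid_at_of_ne_subset (B := Tu) ?_ ?_
      · intro y hy hne
        have hyt : ν y = true := by rw [hνu] at hne; exact aux_bool_true hne
        exact hInS_adj_u y ((hmemnb x y).1 hy) (hνP y hyt)
      · omega
    by_cases hxv : x = v
    · subst hxv
      refine valid_at_of_ne_subset (B := Tv) ?_ ?_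
      · intro y hy hne
        have hyt : ν y = true := by rw [hνv] at hne; exact aux_bool_true hne
        exact hInS_adj_v y ((hmemnb x y).1 hy) (hνP y hyt)
      · omega
    by_cases hxLu : G.Adj u x ∧ G.degree x = 1
    · have hxI : ¬ InS x := fun h => (hTuR x (hInS_adj_u x hxLu.1 h)).2.2.2 hxLu.2
      refine valid_at_of_ne_subset (B := ∅) ?_ (by simp)
      intro y hy hne
      exfalso
      rw [hleafnbr x u hxLu.2 hxLu.1.symm, Finset.mem_singleton] at hy
      subst hy
      exact hne (by rw [hνu, hνf x hxI])
    by_cases hxLv : G.Adj v x ∧ G.degree x = 1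
    · have hxI : ¬ InS x := fun h => (hTvR x (hInS_adj_v x hxLv.1 h)).2.2.2 hxLv.2
      refine valid_at_of_ne_subset (B := ∅) ?_ (by simp)
      intro y hy hne
      exfalso
      rw [hleafnbr x v hxLv.2 hxLv.1.symm, Finset.mem_singleton] at hy
      subst hy
      exact hne (by rw [hνv, hνf x hxI])
    by_cases hxI : InS x
    · have hνx : ν x = true := hνt x hxI
      by_cases hxTu : x ∈ Tu
      · refine valid_at_of_ne_subset (B := {u}) ?_ ?_
        · intro y hy hne
          by_cases hyu : y = u
          · rw [hyu]; exact Finset.mem_singleton_self u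
          by_cases hyv : y = v
          · exfalso
            subst hyv
            exact aux_no_triangle hacy huv (hTuR x hxTu).1 ((hmemnb x y).1 hy).symm
          · exact absurd (by rw [hνx,
              hνt y (hInS_closed x y hxI ((hmemnb x y).1 hy) hyu hyv)]) hne
        · have hd1 : 1 ≤ G.degree x := by
            rw [← hdeg_eq]
            exact Finset.card_pos.2 ⟨u, (hmemnb x u).2 (hTuR x hxTu).1.symm⟩
          have hdx := (hTuR x hxTu).2.2.2
          rw [Finset.card_singleton]
          omega
      by_cases hxTv : x ∈ Tv
      · refine valid_at_of_ne_subset (B := {v}) ?_ ?_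
        · intro y hy hne
          by_cases hyv : y = v
          · rw [hyv]; exact Finset.mem_singleton_self v
          by_cases hyu : y = u
          · exfalso
            subst hyu
            exact aux_no_triangle hacy huv ((hmemnb x y).1 hy).symm (hTvR x hxTv).1
          · exact absurd (by rw [hνx,
              hνt y (hInS_closed x y hxI ((hmemnb x y).1 hy) hyu hyv)]) hne
        · have hd1 : 1 ≤ G.degree x := by
            rw [← hdeg_eq]
            exact Finset.card_pos.2 ⟨v, (hmemnb x v).2 (hTvR x hxTv).1.symm⟩
          have hdx := (hTvR x hxTv).2.2.2
          rw [Finset.card_singleton]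
          omega
      · refine valid_at_of_ne_subset (B := ∅) ?_ (by simp)
        intro y hy hne
        exfalso
        by_cases hyu : y = u
        · subst hyu
          exact hxTu (hInS_adj_u x ((hmemnb x y).1 hy).symm hxI)
        by_cases hyv : y = v
        · subst hyv
          exact hxTv (hInS_adj_v x ((hmemnb x y).1 hy).symm hxI)
        · exact hne (by rw [hνx,
            hνt y (hInS_closed x y hxI ((hmemnb x y).1 hy) hyu hyv)])
    · refine valid_at_of_ne_subset (B := ∅) ?_ (by simp)
      intro y hy hne
      exfalso
      have hyt : ν y = true := by rw [hνf x hxI] at hne; exact aux_bool_true hne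
      exact hxI (hInS_closed y x (hνP y hyt) ((hmemnb x y).1 hy).symm hxu hxv)
  refine ⟨μ, ν, hvalidμ, hvalidν, ?_, ?_⟩
  · rw [hμu, hνu]; simp
  · intro x hne
    by_cases hxI : InS x
    · exact absurd (by rw [hμt x (Or.inr (Or.inr (Or.inr (Or.inr hxI)))), hνt x hxI]) hne
    · have hxP : Pm x := by
        by_contra hP
        exact hne (by rw [hμf x hP, hνf x hxI])
      rcases hxP with h | h | h | h | h
      exacts [Or.inl h, Or.inr (Or.inl h), Or.inr (Or.inr (Or.inl h)),
        Or.inr (Or.inr (Or.inr h)), absurd h hxI]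

lemma aux_vc_isIDS (hodd : ∀ w : V, Odd (G.degree w)) {C : Set V}
    (hvc : _root_.IsVertexCover G C) : IsIDS G C := by
  classical
  intro μ ν hμ hν hag
  by_contra hfne
  obtain ⟨x, hx⟩ := Function.ne_iff.mp hfne
  have hxC : x ∉ C := fun h => hx (hag x h)
  have hnb : ∀ y ∈ G.neighborFinset x, μ y = ν y := by
    intro y hy
    rcases hvc ((G.mem_neighborFinset _ _).1 hy) with h | h
    · exact absurd h hxC
    · exact hag y h
  have hsum : ((G.neighborFinset x).filter fun y => μ y = μ x).card +
      ((G.neighborFinset x).filter fun y => μ y ≠ μ x).card = G.degree x :=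
    Finset.card_filter_add_card_filter_not (p := fun y => μ y = μ x)
  have hswap_eq : ((G.neighborFinset x).filter fun y => ν y = ν x) =
      ((G.neighborFinset x).filter fun y => μ y ≠ μ x) := by
    apply Finset.filter_congr
    intro y hy
    rw [← hnb y hy]
    revert hx
    cases μ x <;> cases ν x <;> cases μ y <;> simp
  have hswap_ne : ((G.neighborFinset x).filter fun y => ν y ≠ ν x) =
      ((G.neighborFinset x).filter fun y => μ y = μ x) := by
    apply Finset.filter_congr
    intro y hy
    rw [← hnb y hy]
    revert hx
    cases μ x <;> cases ν x <;> cases μ y <;> simp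
  have h1 := hμ x
  have h2 := hν x
  rw [hswap_eq, hswap_ne] at h2
  obtain ⟨k, hk⟩ := hodd x
  omega

end Main
end AuxIDS

/-- in an odd-degree tree, a minimum vertex cover among the vertex
covers containing no leaf is a minimum IDS. -/
theorem leafless_min_vertexCover_is_min_ids {V : Type*} [Fintype V]
    (G : SimpleGraph V) (htree : G.IsTree) (hodd : ∀ v : V, Odd (G.degree v))
    (C : Finset V) (hvc : _root_.IsVertexCover G ↑C) (hleaf : ∀ v ∈ C, G.degree v ≠ 1)
    (hmin : ∀ C' : Finset V, _root_.IsVertexCover G ↑C' → (∀ v ∈ C', G.degree v ≠ 1) →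
      C.card ≤ C'.card) :
    IsIDS G ↑C ∧ ∀ D : Finset V, IsIDS G ↑D → C.card ≤ D.card := by
  classical
  refine ⟨aux_vc_isIDS hodd hvc, ?_⟩
  intro D hD
  haveI hnev : Nonempty V := htree.isConnected.nonempty
  set f : V → V := fun x => if G.degree x = 1 then Classical.epsilon (G.Adj x) else x with hf
  have hf1 : ∀ x, G.degree x = 1 → G.Adj x (f x) := by
    intro x hx
    have hex : ∃ y, G.Adj x y := by
      have hpos : 0 < (G.neighborFinset x).card := by
        rw [SimpleGraph.card_neighborFinset_eq_degree, hx]; omega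
      obtain ⟨y, hy⟩ := Finset.card_pos.1 hpos
      exact ⟨y, (G.mem_neighborFinset _ _).1 hy⟩
    simp only [hf, hx, if_pos]
    exact Classical.epsilon_spec hex
  have hf2 : ∀ x y, G.degree x = 1 → G.Adj x y → f x = y := by
    intro x y hx hxy
    have hcard : (G.neighborFinset x).card ≤ 1 := by
      rw [SimpleGraph.card_neighborFinset_eq_degree, hx]
    exact Finset.card_le_one.1 hcard _ ((G.mem_neighborFinset _ _).2 (hf1 x hx))
      _ ((G.mem_neighborFinset _ _).2 hxy)
  have hfeq : ∀ x, G.degree x ≠ 1 → f x = x := fun x hx => by simp [hf, hx]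
  set C' : Finset V := D.image f with hC'
  have hC'leaf : ∀ y ∈ C', G.degree y ≠ 1 := by
    intro y hy
    obtain ⟨x, hxD, rfl⟩ := Finset.mem_image.1 hy
    by_cases hx : G.degree x = 1
    · intro hfx1
      rcases hvc (hf1 x hx) with h | h
      · exact hleaf x h hx
      · exact hleaf _ h hfx1
    · rw [hfeq x hx]; exact hx
  have hC'vc : _root_.IsVertexCover G (↑C' : Set V) := by
    intro a b hab
    by_contra hcon
    push_neg at hcon
    obtain ⟨μ', ν', hμ', hν', hneab, hdiff⟩ := exists_two_valid htree hab
    have hagree : ∀ x ∈ (↑D : Set V), μ' x = ν' x := by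
      intro x hxD
      by_contra hnex
      have hxC' : f x ∈ C' := Finset.mem_image_of_mem f hxD
      rcases hdiff x hnex with rfl | rfl | ⟨hadj, hdeg⟩ | ⟨hadj, hdeg⟩
      · by_cases hd : G.degree x = 1
        · exact hcon.2 (Finset.mem_coe.2 (hf2 x b hd hab ▸ hxC'))
        · exact hcon.1 (Finset.mem_coe.2 (hfeq x hd ▸ hxC'))
      · by_cases hd : G.degree x = 1
        · exact hcon.1 (Finset.mem_coe.2 (hf2 x a hd hab.symm ▸ hxC'))
        · exact hcon.2 (Finset.mem_coe.2 (hfeq x hd ▸ hxC'))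
      · exact hcon.1 (Finset.mem_coe.2 (hf2 x a hdeg hadj.symm ▸ hxC'))
      · exact hcon.2 (Finset.mem_coe.2 (hf2 x b hdeg hadj.symm ▸ hxC'))
    exact hneab (congrFun (hD μ' ν' hμ' hν' hagree) a)
  calc C.card ≤ C'.card := hmin C' hC'vc hC'leaf
    _ ≤ D.card := Finset.card_image_le
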